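/- There is a bijection between the tubes of G with at least one edge and the induced tubes of the line graph L(G), given by T ↦ L(T); moreover, under this bijection, two tubes S, T of G overlap if and only if the induced tubes L(S), L(T) of L(G) are incompatible. -/

import Mathlib

open SimpleGraph

namespace Cosmo

variable {V : Type*}

/-- A tube of `G` is a connected subgraph. -/
def IsTube (G : SimpleGraph V) (T : G.Subgraph) : Prop := T.Connected

/-- Tubes are nested if one contains the other. -/
def Nested {G : SimpleGraph V} (S T : G.Subgraph) : Prop := S ≤ T ∨ T ≤ S

/-- Tubes overlap if their (vertex) intersection is nonempty and they are not nested. -/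
def Overlapping {G : SimpleGraph V} (S T : G.Subgraph) : Prop :=
  (S.verts ∩ T.verts).Nonempty ∧ ¬ Nested S T

/-- Tubes are incompatible if there is an edge of `G` between them and they are not nested. -/
def Incompatible {G : SimpleGraph V} (S T : G.Subgraph) : Prop :=
  (∃ u w, G.Adj u w ∧ u ∈ S.verts ∧ w ∈ T.verts) ∧ ¬ Nested S T

/-- Tubes are compatible if they are not incompatible. -/
def Compatible {G : SimpleGraph V} (S T : G.Subgraph) : Prop := ¬ Incompatible S T

/-- A complete tubing: a maximal collection of pairwise non-overlapping tubes. -/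
def IsCompleteTubing (G : SimpleGraph V) (𝒯 : Set G.Subgraph) : Prop :=
  Maximal (fun 𝒞 : Set G.Subgraph =>
    (∀ T ∈ 𝒞, IsTube G T) ∧ 𝒞.Pairwise fun S T => ¬ Overlapping S T) 𝒯

/-- An admissible tubing: a maximal collection of pairwise compatible induced tubes. -/
def IsAdmissibleTubing (G : SimpleGraph V) (𝒯 : Set G.Subgraph) : Prop :=
  Maximal (fun 𝒞 : Set G.Subgraph =>
    (∀ T ∈ 𝒞, IsTube G T ∧ T.IsInduced) ∧ 𝒞.Pairwise Compatible) 𝒯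

/-- A labeling of an admissible tubing by the vertices, as in the bijection lemma:
`g v` is the tube associated to `v`, i.e. `v ∈ g v` and `v` avoids all strictly
smaller tubes of the tubing. -/
def IsVertexLabeling (G : SimpleGraph V) (𝒯 : Set G.Subgraph) (g : V → G.Subgraph) : Prop :=
  Set.BijOn g Set.univ 𝒯 ∧ ∀ v, v ∈ (g v).verts ∧ ∀ S ∈ 𝒯, S < g v → v ∉ S.verts


/-- The induced subgraph of the line graph `L(G)` on the edges of a subgraph `T` of `G`,
i.e. the natural copy of `L(T)` inside `L(G)`. -/
def lineSubgraph {V : Type*} (G : SimpleGraph V) (T : G.Subgraph) : (G.lineGraph).Subgraph where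
  verts := {e | (e : Sym2 V) ∈ T.edgeSet}
  Adj e f := (e : Sym2 V) ∈ T.edgeSet ∧ (f : Sym2 V) ∈ T.edgeSet ∧ (G.lineGraph).Adj e f
  adj_sub h := h.2.2
  edge_vert h := h.1
  symm := ⟨fun e f h => ⟨h.2.1, h.1, h.2.2.symm⟩⟩

section Aux

variable {G : SimpleGraph V}

private lemma exists_adj_of_reachable {W : Type*} {H : SimpleGraph W} {x y : W}
    (h : H.Reachable x y) (hxy : x ≠ y) : ∃ z, H.Adj x z := by
  obtain ⟨p⟩ := h
  cases p with
  | nil => exact absurd rfl hxy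
  | cons h _ => exact ⟨_, h⟩

lemma exists_adj_of_tube {T : G.Subgraph} (hT : IsTube G T) (hE : T.edgeSet.Nonempty)
    {v : V} (hv : v ∈ T.verts) : ∃ w, T.Adj v w := by
  obtain ⟨e, he⟩ := hE
  induction e using Sym2.ind with
  | _ a b =>
    have hab : T.Adj a b := he
    by_cases hva : v = a
    · exact ⟨b, hva ▸ hab⟩
    · obtain ⟨z, hz⟩ := exists_adj_of_reachable
        (hT.coe.preconnected ⟨v, hv⟩ ⟨a, hab.fst_mem⟩)
        (by simp [Subtype.ext_iff, hva])
      exact ⟨z, hz⟩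

lemma le_of_edgeSet_subset {S T : G.Subgraph} (hS : IsTube G S) (hSe : S.edgeSet.Nonempty)
    (h : S.edgeSet ⊆ T.edgeSet) : S ≤ T := by
  refine ⟨fun v hv => ?_, fun v w hvw => ?_⟩
  · obtain ⟨w, hw⟩ := exists_adj_of_tube hS hSe hv
    exact (Subgraph.mem_edgeSet.1 (h (Subgraph.mem_edgeSet.2 hw))).fst_mem
  · exact Subgraph.mem_edgeSet.1 (h (Subgraph.mem_edgeSet.2 hvw))

lemma lineSubgraph_mono {S T : G.Subgraph} (h : S ≤ T) :
    lineSubgraph G S ≤ lineSubgraph G T :=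
  ⟨fun _ he => Subgraph.edgeSet_mono h he,
   fun _ _ hef => ⟨Subgraph.edgeSet_mono h hef.1, Subgraph.edgeSet_mono h hef.2.1, hef.2.2⟩⟩

lemma edgeSet_subset_of_lineSubgraph_le {S T : G.Subgraph}
    (h : lineSubgraph G S ≤ lineSubgraph G T) : S.edgeSet ⊆ T.edgeSet := fun s hs =>
  h.1 (show (⟨s, S.edgeSet_subset hs⟩ : G.edgeSet) ∈ (lineSubgraph G S).verts from hs)

lemma nested_iff {S T : G.Subgraph} (hS : IsTube G S) (hSe : S.edgeSet.Nonempty)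
    (hT : IsTube G T) (hTe : T.edgeSet.Nonempty) :
    Nested S T ↔ Nested (lineSubgraph G S) (lineSubgraph G T) := by
  constructor
  · rintro (h | h)
    · exact Or.inl (lineSubgraph_mono h)
    · exact Or.inr (lineSubgraph_mono h)
  · rintro (h | h)
    · exact Or.inl (le_of_edgeSet_subset hS hSe (edgeSet_subset_of_lineSubgraph_le h))
    · exact Or.inr (le_of_edgeSet_subset hT hTe (edgeSet_subset_of_lineSubgraph_le h))

lemma reach_share {T : G.Subgraph} {e f : G.edgeSet} (he : (e : Sym2 V) ∈ T.edgeSet)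
    (hf : (f : Sym2 V) ∈ T.edgeSet) {v : V} (hve : v ∈ (e : Sym2 V))
    (hvf : v ∈ (f : Sym2 V)) :
    (lineSubgraph G T).coe.Reachable ⟨e, he⟩ ⟨f, hf⟩ := by
  by_cases hef : e = f
  · subst hef; exact Reachable.refl _
  · exact SimpleGraph.Adj.reachable
      ⟨he, hf, lineGraph_adj_iff_exists.2 ⟨hef, v, hve, hvf⟩⟩

lemma reach_of_walk {T : G.Subgraph} {x y : T.verts} (W : T.coe.Walk x y) :
    ∀ (e f : G.edgeSet) (he : (e : Sym2 V) ∈ T.edgeSet) (hf : (f : Sym2 V) ∈ T.edgeSet),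
      (x : V) ∈ (e : Sym2 V) → (y : V) ∈ (f : Sym2 V) →
      (lineSubgraph G T).coe.Reachable ⟨e, he⟩ ⟨f, hf⟩ := by
  induction W with
  | nil => exact fun e f he hf hx hy => reach_share he hf hx hy
  | @cons a b c h p ih =>
    intro e f he hf hx hy
    have hab : T.Adj (a : V) (b : V) := h
    have hg : s((a : V), (b : V)) ∈ T.edgeSet := hab
    refine (reach_share (T := T) (f := ⟨s((a : V), (b : V)), T.edgeSet_subset hg⟩)
      he hg hx (Sym2.mem_mk_left _ _)).trans ?_
    exact ih ⟨s((a : V), (b : V)), T.edgeSet_subset hg⟩ f hg hf (Sym2.mem_mk_right _ _) hy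

lemma lineSubgraph_tube {T : G.Subgraph} (hT : IsTube G T) (hE : T.edgeSet.Nonempty) :
    IsTube G.lineGraph (lineSubgraph G T) := by
  obtain ⟨e0, he0⟩ := hE
  constructor
  rw [SimpleGraph.connected_iff]
  constructor
  · rintro ⟨⟨e, heG⟩, he⟩ ⟨⟨f, hfG⟩, hf⟩
    have hx : e.out.1 ∈ e := Sym2.out_fst_mem e
    have hy : f.out.1 ∈ f := Sym2.out_fst_mem f
    have hxv : e.out.1 ∈ T.verts := Subgraph.mem_verts_of_mem_edge he hx
    have hyv : f.out.1 ∈ T.verts := Subgraph.mem_verts_of_mem_edge hf hy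
    obtain ⟨W⟩ := hT.coe.preconnected ⟨_, hxv⟩ ⟨_, hyv⟩
    exact reach_of_walk W ⟨e, heG⟩ ⟨f, hfG⟩ he hf hx hy
  · exact ⟨⟨⟨e0, T.edgeSet_subset he0⟩, he0⟩⟩

lemma lineSubgraph_induced (T : G.Subgraph) : (lineSubgraph G T).IsInduced :=
  fun _ hu _ hv hadj => ⟨hu, hv, hadj⟩

/-- Inverse construction: from an induced tube of the line graph back to a subgraph of `G`. -/
def unline (G : SimpleGraph V) (T' : (G.lineGraph).Subgraph) : G.Subgraph where
  verts := {v | ∃ e ∈ T'.verts, v ∈ (e : Sym2 V)}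
  Adj u w := G.Adj u w ∧ ∃ e ∈ T'.verts, (e : Sym2 V) = s(u, w)
  adj_sub h := h.1
  edge_vert := by rintro u w ⟨-, e, he, h⟩; exact ⟨e, he, h ▸ Sym2.mem_mk_left u w⟩
  symm := ⟨by rintro u w ⟨ha, e, he, h⟩; exact ⟨ha.symm, e, he, h.trans Sym2.eq_swap⟩⟩

lemma mem_unline_edgeSet {T' : (G.lineGraph).Subgraph} {s : Sym2 V} :
    s ∈ (unline G T').edgeSet ↔ ∃ e ∈ T'.verts, (e : Sym2 V) = s := by
  induction s using Sym2.ind with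
  | _ u w =>
    rw [Subgraph.mem_edgeSet]
    constructor
    · rintro ⟨-, e, he, h⟩; exact ⟨e, he, h⟩
    · rintro ⟨e, he, h⟩
      exact ⟨G.mem_edgeSet.mp (h ▸ e.2), e, he, h⟩

lemma unline_reach_share {T' : (G.lineGraph).Subgraph} {e : G.edgeSet} (he : e ∈ T'.verts)
    {u v : V} (hu : u ∈ (e : Sym2 V)) (hv : v ∈ (e : Sym2 V))
    (hu' : u ∈ (unline G T').verts) (hv' : v ∈ (unline G T').verts) :
    (unline G T').coe.Reachable ⟨u, hu'⟩ ⟨v, hv'⟩ := by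
  by_cases huv : u = v
  · subst huv; exact Reachable.refl _
  · have heq : (e : Sym2 V) = s(u, v) := (Sym2.mem_and_mem_iff huv).1 ⟨hu, hv⟩
    have hG : G.Adj u v := G.mem_edgeSet.mp (heq ▸ e.2)
    exact SimpleGraph.Adj.reachable ⟨hG, e, he, heq⟩

lemma unline_reach_of_walk {T' : (G.lineGraph).Subgraph} {x y : T'.verts}
    (W : T'.coe.Walk x y) :
    ∀ (u v : V), u ∈ ((x : G.edgeSet) : Sym2 V) → v ∈ ((y : G.edgeSet) : Sym2 V) →
      ∀ (hu' : u ∈ (unline G T').verts) (hv' : v ∈ (unline G T').verts),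
      (unline G T').coe.Reachable ⟨u, hu'⟩ ⟨v, hv'⟩ := by
  induction W with
  | @nil a => exact fun u v hu hv hu' hv' => unline_reach_share a.2 hu hv hu' hv'
  | @cons a b c h p ih =>
    intro u v hu hv hu' hv'
    have hadj : (G.lineGraph).Adj (a : G.edgeSet) (b : G.edgeSet) := T'.adj_sub h
    obtain ⟨-, w, hwa, hwb⟩ := lineGraph_adj_iff_exists.1 hadj
    have hw' : w ∈ (unline G T').verts := ⟨(b : G.edgeSet), b.2, hwb⟩
    exact (unline_reach_share a.2 hu hwa hu' hw').trans (ih w v hwb hv hw' hv')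

lemma unline_tube {T' : (G.lineGraph).Subgraph} (hT' : IsTube G.lineGraph T') :
    IsTube G (unline G T') := by
  constructor
  rw [SimpleGraph.connected_iff]
  constructor
  · intro x y
    obtain ⟨e, he, hue⟩ := (x.2 : ∃ e ∈ T'.verts, (x : V) ∈ (e : Sym2 V))
    obtain ⟨f, hf, hvf⟩ := (y.2 : ∃ e ∈ T'.verts, (y : V) ∈ (e : Sym2 V))
    obtain ⟨W⟩ := hT'.coe.preconnected ⟨e, he⟩ ⟨f, hf⟩
    exact unline_reach_of_walk W (x : V) (y : V) hue hvf x.2 y.2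
  · obtain ⟨e, he⟩ := hT'.coe.nonempty
    exact ⟨⟨(e : Sym2 V).out.1, e, he, Sym2.out_fst_mem _⟩⟩

lemma lineSubgraph_unline {T' : (G.lineGraph).Subgraph} (hInd : T'.IsInduced) :
    lineSubgraph G (unline G T') = T' := by
  have hverts : ∀ e : G.edgeSet, e ∈ (lineSubgraph G (unline G T')).verts ↔ e ∈ T'.verts := by
    intro e
    constructor
    · intro he
      obtain ⟨f, hf, hef⟩ := mem_unline_edgeSet.1 he
      exact (Subtype.coe_injective hef) ▸ hf
    · intro he
      exact mem_unline_edgeSet.2 ⟨e, he, rfl⟩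
  apply Subgraph.ext
  · ext e; exact hverts e
  · ext e f
    constructor
    · rintro ⟨he, hf, hadj⟩
      exact hInd ((hverts e).1 he) ((hverts f).1 hf) hadj
    · intro h
      exact ⟨(hverts e).2 h.fst_mem, (hverts f).2 h.snd_mem, T'.adj_sub h⟩

end Aux

/-- `T ↦ L(T)` is a bijection from tubes of `G` with at least one edge onto
induced tubes of `L(G)`, under which overlapping tubes correspond to incompatible tubes. -/
theorem lineSubgraph_bijOn {V : Type*} (G : SimpleGraph V) (hG : G.edgeSet.Nonempty) :
    Set.BijOn (lineSubgraph G)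
      {T : G.Subgraph | IsTube G T ∧ T.edgeSet.Nonempty}
      {T' : (G.lineGraph).Subgraph | IsTube G.lineGraph T' ∧ T'.IsInduced} ∧
    ∀ S T : G.Subgraph,
      (IsTube G S ∧ S.edgeSet.Nonempty) → (IsTube G T ∧ T.edgeSet.Nonempty) →
      (Overlapping S T ↔ Incompatible (lineSubgraph G S) (lineSubgraph G T)) :=
  by
  constructor
  · refine ⟨fun T hT => ⟨lineSubgraph_tube hT.1 hT.2, lineSubgraph_induced T⟩, ?_, ?_⟩
    · rintro S hS T hT h
      have hedge : S.edgeSet = T.edgeSet := by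
        ext s
        constructor
        · intro hs
          exact show (⟨s, S.edgeSet_subset hs⟩ : G.edgeSet) ∈ (lineSubgraph G T).verts by
            rw [← h]; exact hs
        · intro hs
          exact show (⟨s, T.edgeSet_subset hs⟩ : G.edgeSet) ∈ (lineSubgraph G S).verts by
            rw [h]; exact hs
      exact le_antisymm (le_of_edgeSet_subset hS.1 hS.2 hedge.le)
        (le_of_edgeSet_subset hT.1 hT.2 hedge.ge)
    · rintro T' ⟨hT'c, hT'i⟩
      obtain ⟨e, he⟩ := hT'c.coe.nonempty
      exact ⟨unline G T',
        ⟨unline_tube hT'c, ⟨(e : Sym2 V), mem_unline_edgeSet.2 ⟨e, he, rfl⟩⟩⟩,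
        lineSubgraph_unline hT'i⟩
  · rintro S T ⟨hS, hSe⟩ ⟨hT, hTe⟩
    constructor
    · rintro ⟨⟨v, hvS, hvT⟩, hnest⟩
      refine ⟨?_, fun hn => hnest ((nested_iff hS hSe hT hTe).2 hn)⟩
      obtain ⟨a, ha⟩ := exists_adj_of_tube hS hSe hvS
      obtain ⟨b, hb⟩ := exists_adj_of_tube hT hTe hvT
      have heS : s(v, a) ∈ S.edgeSet := ha
      have hfT : s(v, b) ∈ T.edgeSet := hb
      by_cases hef : (⟨s(v, a), S.edgeSet_subset heS⟩ : G.edgeSet)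
          = (⟨s(v, b), T.edgeSet_subset hfT⟩ : G.edgeSet)
      · have hST : ¬ S ≤ T := fun hle => hnest (Or.inl hle)
        have hsub : ¬ S.edgeSet ⊆ T.edgeSet := fun hsub =>
          hST (le_of_edgeSet_subset hS hSe hsub)
        obtain ⟨g, hgS, hgT⟩ := Set.not_subset.1 hsub
        have hgE : (⟨g, S.edgeSet_subset hgS⟩ : G.edgeSet) ∈ (lineSubgraph G S).verts := hgS
        have hne : (⟨⟨s(v, a), S.edgeSet_subset heS⟩, heS⟩ : (lineSubgraph G S).verts)
            ≠ ⟨⟨g, S.edgeSet_subset hgS⟩, hgE⟩ := by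
          intro hcon
          apply hgT
          have : s(v, a) = g := congrArg (fun z => ((z : G.edgeSet) : Sym2 V))
            (congrArg Subtype.val hcon)
          rw [← this]
          have : s(v, a) = s(v, b) := congrArg Subtype.val hef
          rw [this]; exact hfT
        have hLS := lineSubgraph_tube hS hSe
        obtain ⟨z, hz⟩ := exists_adj_of_reachable
          (hLS.coe.preconnected ⟨⟨s(v, a), S.edgeSet_subset heS⟩, heS⟩
            ⟨⟨g, S.edgeSet_subset hgS⟩, hgE⟩) hne
        have hzadj : (G.lineGraph).Adj (⟨s(v, a), S.edgeSet_subset heS⟩ : G.edgeSet)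
            (z : G.edgeSet) := hz.2.2
        refine ⟨(z : G.edgeSet), ⟨s(v, b), T.edgeSet_subset hfT⟩, ?_, hz.2.1, hfT⟩
        rw [← hef]
        exact hzadj.symm
      · refine ⟨⟨s(v, a), S.edgeSet_subset heS⟩, ⟨s(v, b), T.edgeSet_subset hfT⟩, ?_, heS, hfT⟩
        exact lineGraph_adj_iff_exists.2
          ⟨hef, v, Sym2.mem_mk_left _ _, Sym2.mem_mk_left _ _⟩
    · rintro ⟨⟨u, w, hadj, huS, hwT⟩, hnest⟩
      refine ⟨?_, fun hn => hnest ((nested_iff hS hSe hT hTe).1 hn)⟩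
      obtain ⟨-, x, hxu, hxw⟩ := lineGraph_adj_iff_exists.1 hadj
      exact ⟨x, Subgraph.mem_verts_of_mem_edge huS hxu,
        Subgraph.mem_verts_of_mem_edge hwT hxw⟩

end Cosmo
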